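/- arXiv:1806.09215 — 2 statements merged into one kernel-verified Lean document; each statement's English description precedes it below -/
import Mathlib

section
/- Let N ≥ 1, let h : Fin N → ℝ, let p̂ be a probability vector in ℝ^N, and let c : Fin N × Fin N → ℝ≥0 satisfy c(i,i) = 0. Define W(p) = min { Σ_{i,j} c(i,j) w_{ij} : w ≥ 0, Σ_j w_{ij} = p_i ∀i, Σ_i w_{ij} = p̂_j ∀j } for probability vectors p. Then the function r ↦ max { Σ_i h_i p_i : p a probability vector with W(p) ≤ r } is nondecreasing and concave on [0, ∞). -/
open Finset

theorem stmt6 (N : ℕ) (hN : 1 ≤ N) (h : Fin N → ℝ) (phat : Fin N → ℝ)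
    (hphat : (∀ i, 0 ≤ phat i) ∧ ∑ i, phat i = 1)
    (c : Fin N → Fin N → ℝ) (hc : ∀ i j, 0 ≤ c i j) (hcd : ∀ i, c i i = 0)
    (W : (Fin N → ℝ) → ℝ)
    (hW : ∀ p, W p = sInf {v : ℝ | ∃ w : Fin N → Fin N → ℝ, (∀ i j, 0 ≤ w i j) ∧
      (∀ i, ∑ j, w i j = p i) ∧ (∀ j, ∑ i, w i j = phat j) ∧
      v = ∑ i, ∑ j, c i j * w i j})
    (g : ℝ → ℝ)
    (hg : ∀ r, g r = sSup {v : ℝ | ∃ p : Fin N → ℝ, (∀ i, 0 ≤ p i) ∧ ∑ i, p i = 1 ∧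
      W p ≤ r ∧ v = ∑ i, h i * p i}) :
    MonotoneOn g (Set.Ici (0 : ℝ)) ∧ ConcaveOn ℝ (Set.Ici (0 : ℝ)) g := by
  obtain ⟨hphat0, hphat1⟩ := hphat
  -- the coupling set
  have hCbdd : ∀ p : Fin N → ℝ, BddBelow {v : ℝ | ∃ w : Fin N → Fin N → ℝ, (∀ i j, 0 ≤ w i j) ∧
      (∀ i, ∑ j, w i j = p i) ∧ (∀ j, ∑ i, w i j = phat j) ∧
      v = ∑ i, ∑ j, c i j * w i j} := by
    intro p
    refine ⟨0, ?_⟩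
    rintro v ⟨w, hw0, -, -, rfl⟩
    exact Finset.sum_nonneg fun i _ => Finset.sum_nonneg fun j _ =>
      mul_nonneg (hc i j) (hw0 i j)
  have hCne : ∀ p : Fin N → ℝ, (∀ i, 0 ≤ p i) → ∑ i, p i = 1 →
      Set.Nonempty {v : ℝ | ∃ w : Fin N → Fin N → ℝ, (∀ i j, 0 ≤ w i j) ∧
      (∀ i, ∑ j, w i j = p i) ∧ (∀ j, ∑ i, w i j = phat j) ∧
      v = ∑ i, ∑ j, c i j * w i j} := by
    intro p hp0 hp1
    refine ⟨_, fun i j => p i * phat j, fun i j => mul_nonneg (hp0 i) (hphat0 j), ?_, ?_, rfl⟩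
    · intro i; rw [← Finset.mul_sum, hphat1, mul_one]
    · intro j; rw [← Finset.sum_mul, hp1, one_mul]
  -- W p ≤ v for any coupling value v
  have hWle : ∀ p : Fin N → ℝ, ∀ v, v ∈ {v : ℝ | ∃ w : Fin N → Fin N → ℝ, (∀ i j, 0 ≤ w i j) ∧
      (∀ i, ∑ j, w i j = p i) ∧ (∀ j, ∑ i, w i j = phat j) ∧
      v = ∑ i, ∑ j, c i j * w i j} → W p ≤ v := by
    intro p v hv
    rw [hW]
    exact csInf_le (hCbdd p) hv
  -- W phat ≤ 0
  have hWphat : W phat ≤ 0 := by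
    have hmem : (0 : ℝ) ∈ {v : ℝ | ∃ w : Fin N → Fin N → ℝ, (∀ i j, 0 ≤ w i j) ∧
        (∀ i, ∑ j, w i j = phat i) ∧ (∀ j, ∑ i, w i j = phat j) ∧
        v = ∑ i, ∑ j, c i j * w i j} := by
      refine ⟨fun i j => if i = j then phat i else 0, ?_, ?_, ?_, ?_⟩
      · intro i j; dsimp only; split <;> [exact hphat0 i; rfl]
      · intro i; simp
      · intro j
        rw [Finset.sum_ite_eq' Finset.univ j (fun i => phat i)]
        simp
      · rw [eq_comm]
        refine Finset.sum_eq_zero fun i _ => Finset.sum_eq_zero fun j _ => ?_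
        dsimp only
        split
        · next hij => subst hij; rw [hcd i, zero_mul]
        · rw [mul_zero]
    exact hWle phat 0 hmem
  -- convexity of W
  have hWconv : ∀ (p₁ p₂ : Fin N → ℝ), (∀ i, 0 ≤ p₁ i) → ∑ i, p₁ i = 1 →
      (∀ i, 0 ≤ p₂ i) → ∑ i, p₂ i = 1 → ∀ a b : ℝ, 0 ≤ a → 0 ≤ b → a + b = 1 →
      W (fun i => a * p₁ i + b * p₂ i) ≤ a * W p₁ + b * W p₂ := by
    intro p₁ p₂ h10 h11 h20 h21 a b ha hb hab
    refine le_of_forall_pos_le_add fun ε hε => ?_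
    have h1 : sInf {v : ℝ | ∃ w : Fin N → Fin N → ℝ, (∀ i j, 0 ≤ w i j) ∧
        (∀ i, ∑ j, w i j = p₁ i) ∧ (∀ j, ∑ i, w i j = phat j) ∧
        v = ∑ i, ∑ j, c i j * w i j} < W p₁ + ε := by
      rw [← hW]; linarith
    have h2 : sInf {v : ℝ | ∃ w : Fin N → Fin N → ℝ, (∀ i j, 0 ≤ w i j) ∧
        (∀ i, ∑ j, w i j = p₂ i) ∧ (∀ j, ∑ i, w i j = phat j) ∧
        v = ∑ i, ∑ j, c i j * w i j} < W p₂ + ε := by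
      rw [← hW]; linarith
    obtain ⟨u₁, ⟨w₁, hw₁0, hw₁r, hw₁c, hu₁⟩, hu₁lt⟩ :=
      exists_lt_of_csInf_lt (hCne p₁ h10 h11) h1
    obtain ⟨u₂, ⟨w₂, hw₂0, hw₂r, hw₂c, hu₂⟩, hu₂lt⟩ :=
      exists_lt_of_csInf_lt (hCne p₂ h20 h21) h2
    have hmem : a * u₁ + b * u₂ ∈ {v : ℝ | ∃ w : Fin N → Fin N → ℝ, (∀ i j, 0 ≤ w i j) ∧
        (∀ i, ∑ j, w i j = (fun i => a * p₁ i + b * p₂ i) i) ∧ (∀ j, ∑ i, w i j = phat j) ∧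
        v = ∑ i, ∑ j, c i j * w i j} := by
      refine ⟨fun i j => a * w₁ i j + b * w₂ i j, ?_, ?_, ?_, ?_⟩
      · intro i j
        exact add_nonneg (mul_nonneg ha (hw₁0 i j)) (mul_nonneg hb (hw₂0 i j))
      · intro i
        rw [Finset.sum_add_distrib, ← Finset.mul_sum, ← Finset.mul_sum, hw₁r i, hw₂r i]
      · intro j
        rw [Finset.sum_add_distrib, ← Finset.mul_sum, ← Finset.mul_sum, hw₁c j, hw₂c j,
          ← add_mul, hab, one_mul]
      · rw [hu₁, hu₂, Finset.mul_sum, Finset.mul_sum, ← Finset.sum_add_distrib]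
        refine Finset.sum_congr rfl fun i _ => ?_
        rw [Finset.mul_sum, Finset.mul_sum, ← Finset.sum_add_distrib]
        refine Finset.sum_congr rfl fun j _ => ?_
        ring
    have := hWle _ _ hmem
    nlinarith [mul_le_mul_of_nonneg_left hu₁lt.le ha, mul_le_mul_of_nonneg_left hu₂lt.le hb]
  -- the sup-sets
  have hSbdd : ∀ r : ℝ, BddAbove {v : ℝ | ∃ p : Fin N → ℝ, (∀ i, 0 ≤ p i) ∧ ∑ i, p i = 1 ∧
      W p ≤ r ∧ v = ∑ i, h i * p i} := by
    intro r
    refine ⟨∑ i, |h i|, ?_⟩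
    rintro v ⟨p, hp0, hp1, -, rfl⟩
    refine Finset.sum_le_sum fun i _ => ?_
    have hpi1 : p i ≤ 1 := by
      rw [← hp1]
      exact Finset.single_le_sum (fun j _ => hp0 j) (Finset.mem_univ i)
    calc h i * p i ≤ |h i| * p i := mul_le_mul_of_nonneg_right (le_abs_self _) (hp0 i)
      _ ≤ |h i| * 1 := mul_le_mul_of_nonneg_left hpi1 (abs_nonneg _)
      _ = |h i| := mul_one _
  have hSne : ∀ r : ℝ, 0 ≤ r → Set.Nonempty {v : ℝ | ∃ p : Fin N → ℝ, (∀ i, 0 ≤ p i) ∧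
      ∑ i, p i = 1 ∧ W p ≤ r ∧ v = ∑ i, h i * p i} := by
    intro r hr
    exact ⟨_, phat, hphat0, hphat1, hWphat.trans hr, rfl⟩
  constructor
  · -- monotone
    intro r hr s hs hrs
    rw [hg, hg]
    refine csSup_le_csSup (hSbdd s) (hSne r hr) ?_
    rintro v ⟨p, hp0, hp1, hpr, rfl⟩
    exact ⟨p, hp0, hp1, hpr.trans hrs, rfl⟩
  · -- concave
    refine ⟨convex_Ici 0, ?_⟩
    intro r₁ hr₁ r₂ hr₂ a b ha hb hab
    simp only [smul_eq_mul] at *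
    refine le_of_forall_pos_le_add fun ε hε => ?_
    have h1 : g r₁ - ε < sSup {v : ℝ | ∃ p : Fin N → ℝ, (∀ i, 0 ≤ p i) ∧ ∑ i, p i = 1 ∧
        W p ≤ r₁ ∧ v = ∑ i, h i * p i} := by rw [← hg]; linarith
    have h2 : g r₂ - ε < sSup {v : ℝ | ∃ p : Fin N → ℝ, (∀ i, 0 ≤ p i) ∧ ∑ i, p i = 1 ∧
        W p ≤ r₂ ∧ v = ∑ i, h i * p i} := by rw [← hg]; linarith
    obtain ⟨v₁, ⟨p₁, hp₁0, hp₁1, hp₁r, hv₁⟩, hv₁gt⟩ :=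
      exists_lt_of_lt_csSup (hSne r₁ hr₁) h1
    obtain ⟨v₂, ⟨p₂, hp₂0, hp₂1, hp₂r, hv₂⟩, hv₂gt⟩ :=
      exists_lt_of_lt_csSup (hSne r₂ hr₂) h2
    -- mixed point
    have hWmix : W (fun i => a * p₁ i + b * p₂ i) ≤ a * r₁ + b * r₂ := by
      refine (hWconv p₁ p₂ hp₁0 hp₁1 hp₂0 hp₂1 a b ha hb hab).trans ?_
      exact add_le_add (mul_le_mul_of_nonneg_left hp₁r ha) (mul_le_mul_of_nonneg_left hp₂r hb)
    have hmem : a * v₁ + b * v₂ ∈ {v : ℝ | ∃ p : Fin N → ℝ, (∀ i, 0 ≤ p i) ∧ ∑ i, p i = 1 ∧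
        W p ≤ a * r₁ + b * r₂ ∧ v = ∑ i, h i * p i} := by
      refine ⟨fun i => a * p₁ i + b * p₂ i, ?_, ?_, hWmix, ?_⟩
      · intro i
        exact add_nonneg (mul_nonneg ha (hp₁0 i)) (mul_nonneg hb (hp₂0 i))
      · rw [Finset.sum_add_distrib, ← Finset.mul_sum, ← Finset.mul_sum, hp₁1, hp₂1,
          mul_one, mul_one, hab]
      · rw [hv₁, hv₂, Finset.mul_sum, Finset.mul_sum, ← Finset.sum_add_distrib]
        refine Finset.sum_congr rfl fun i _ => ?_
        ring
    have hle : a * v₁ + b * v₂ ≤ g (a * r₁ + b * r₂) := by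
      rw [hg]
      exact le_csSup (hSbdd _) hmem
    nlinarith [mul_le_mul_of_nonneg_left hv₁gt.le ha, mul_le_mul_of_nonneg_left hv₂gt.le hb]
end

section
/- Let X and T be compact metric spaces, g : X × T → ℝ continuous, f : X → ℝ continuous, and ε > 0. Consider the exchange procedure: T₀ = ∅; at iteration k, pick x_k minimizing f over { x ∈ X : g(x,t) ≤ 0 ∀ t ∈ T_k } (assume this set is nonempty at every iteration), then pick t_{k+1} ∈ T with g(x_k, t_{k+1}) ≥ sup_{t∈T} g(x_k,t) − ε/2; if g(x_k, t_{k+1}) ≤ ε/2, stop; else T_{k+1} = T_k ∪ {t_{k+1}}. Then the procedure terminates after finitely many iterations. -/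
theorem stmt11 {X T : Type*} [MetricSpace X] [CompactSpace X] [MetricSpace T]
    [CompactSpace T] [Nonempty X] [Nonempty T]
    (g : X → T → ℝ) (hg : Continuous fun p : X × T => g p.1 p.2)
    (f : X → ℝ) (hf : Continuous f) (ε : ℝ) (hε : 0 < ε) :
    ¬ ∃ (x : ℕ → X) (t : ℕ → T),
      (∀ k, (∀ j < k, g (x k) (t j) ≤ 0) ∧
        ∀ y : X, (∀ j < k, g y (t j) ≤ 0) → f (x k) ≤ f y) ∧
      (∀ k, ∀ s : T, g (x k) s - ε / 2 ≤ g (x k) (t k)) ∧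
      (∀ k, ε / 2 < g (x k) (t k)) := by
  rintro ⟨x, t, h1, h2, h3⟩
  have hUC : UniformContinuous (fun p : X × T => g p.1 p.2) :=
    CompactSpace.uniformContinuous_of_continuous hg
  rw [Metric.uniformContinuous_iff] at hUC
  obtain ⟨δ, hδ, hδ'⟩ := hUC (ε / 2) (by linarith)
  obtain ⟨a, -, φ, hφmono, hφlim⟩ :=
    isCompact_univ.tendsto_subseq (x := x) (fun n => Set.mem_univ _)
  have hC : CauchySeq (x ∘ φ) := hφlim.cauchySeq
  rw [Metric.cauchySeq_iff'] at hC
  obtain ⟨N, hN⟩ := hC δ hδ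
  have hlt : φ N < φ (N + 1) := hφmono (Nat.lt_succ_self N)
  have hdist : dist (x (φ (N + 1))) (x (φ N)) < δ := by
    have := hN (N + 1) (Nat.le_succ N)
    simpa [dist_comm] using this
  have hkey : dist (g (x (φ (N + 1))) (t (φ N))) (g (x (φ N)) (t (φ N))) < ε / 2 := by
    have := hδ' (a := (x (φ (N + 1)), t (φ N))) (b := (x (φ N), t (φ N)))
      (by simp [Prod.dist_eq]; exact hdist)
    exact this
  have hle : g (x (φ (N + 1))) (t (φ N)) ≤ 0 := (h1 (φ (N + 1))).1 (φ N) hlt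
  have hgt : ε / 2 < g (x (φ N)) (t (φ N)) := h3 (φ N)
  rw [Real.dist_eq, abs_lt] at hkey
  linarith [hkey.1]
end
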